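/- Let C be a chain that is a k₀-tooth chain for some integer k₀ > 1 (all gaps between consecutive teeth, with endpoints counted as teeth, are multiples of k₀, and all teeth are isolated). Then for every integer p with 1 ≤ p < k₀, the value E_p = -2cos(πp/k₀) is an eigenvalue of the binary-chain Hamiltonian H(V) for every disorder strength V, with an eigenfunction vanishing on all teeth; in particular dE_p/dV = 0. -/

import Mathlib

/-- On a `k₀`-tooth chain (Dirichlet b.c., all tooth positions—with the endpoints `0`
and `L` counted as teeth—multiples of `k₀ > 1`), the value `E_p = -2cos(πp/k₀)` is, for
every `1 ≤ p < k₀`, an eigenvalue of the binary-chain Hamiltonian for every disorder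
strength `V`, with an eigenfunction vanishing on all teeth (hence `dE_p/dV = 0`). -/
theorem stmt18 (L : ℤ) (hL : 2 ≤ L) (k₀ : ℕ) (hk₀ : 1 < k₀) (χ : ℤ → Bool)
    (hLk : (k₀ : ℤ) ∣ L)
    (hteeth : ∀ n : ℤ, 1 ≤ n → n ≤ L - 1 → χ n = true → (k₀ : ℤ) ∣ n) :
    ∀ p : ℕ, 1 ≤ p → p < k₀ →
      ∃ φ : ℤ → ℝ,
        (∃ n : ℤ, 1 ≤ n ∧ n ≤ L - 1 ∧ φ n ≠ 0) ∧
        φ 0 = 0 ∧ φ L = 0 ∧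
        (∀ n : ℤ, 1 ≤ n → n ≤ L - 1 → χ n = true → φ n = 0) ∧
        (∀ V : ℝ, ∀ n : ℤ, 1 ≤ n → n ≤ L - 1 →
          -φ (n + 1) - φ (n - 1) + V * (if χ n then 1 else 0) * φ n
            = (-2 * Real.cos (Real.pi * p / k₀)) * φ n) := by
  intro p hp1 hpk
  set θ : ℝ := Real.pi * p / k₀ with hθ
  have hk0 : (k₀ : ℝ) ≠ 0 := by positivity
  refine ⟨fun n => Real.sin (θ * n), ?_, ?_, ?_, ?_, ?_⟩
  · refine ⟨1, le_refl _, by omega, ?_⟩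
    have h1 : θ * (1 : ℤ) = θ := by push_cast; ring
    dsimp only; rw [h1]
    have hθpos : 0 < θ := by
      have : (0:ℝ) < p := by exact_mod_cast hp1
      have : (0:ℝ) < (k₀:ℝ) := by positivity
      apply div_pos (by positivity)
      positivity
    have hθlt : θ < Real.pi := by
      rw [hθ, div_lt_iff₀ (by positivity)]
      have : (p:ℝ) < (k₀:ℝ) := by exact_mod_cast hpk
      nlinarith [Real.pi_pos]
    exact ne_of_gt (Real.sin_pos_of_pos_of_lt_pi hθpos hθlt)
  · simp
  · obtain ⟨m, hm⟩ := hLk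
    have : θ * (L : ℤ) = (p * m : ℤ) * Real.pi := by
      rw [hθ, hm]; push_cast; field_simp
    dsimp only; rw [this, Real.sin_int_mul_pi]
  · intro n _ _ hχ
    obtain ⟨m, hm⟩ := hteeth n ‹_› ‹_› hχ
    have : θ * (n : ℝ) = (p * m : ℤ) * Real.pi := by
      rw [hθ, hm]; push_cast; field_simp
    dsimp only; rw [this, Real.sin_int_mul_pi]
  · intro V n hn1 hn2
    have htrig : Real.sin (θ * ((n:ℤ) + 1 : ℤ)) + Real.sin (θ * ((n:ℤ) - 1 : ℤ))
        = 2 * Real.cos θ * Real.sin (θ * n) := by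
      push_cast
      rw [mul_add, mul_sub, mul_one, Real.sin_add, Real.sin_sub]
      ring
    by_cases hχ : χ n
    · obtain ⟨m, hm⟩ := hteeth n hn1 hn2 hχ
      have hzero : Real.sin (θ * (n : ℝ)) = 0 := by
        have : θ * (n : ℝ) = (p * m : ℤ) * Real.pi := by
          rw [hθ, hm]; push_cast; field_simp
        rw [this, Real.sin_int_mul_pi]
      simp only [hχ, if_true]
      push_cast at htrig hzero ⊢
      rw [hzero] at htrig ⊢
      linarith
    · simp only [hχ, if_false]
      push_cast at htrig ⊢
      linarith
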